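/- There exists a constant c > 0 such that for every field K, every n ∈ ℕ, and every integer r with 2 ≤ r ≤ 2^{2n}, there exists a 2^n × 2^n matrix B over K with rank(B) ≤ (max(n/ln r, 2))^{c·√(n·log₂ r)} such that B differs from the Walsh–Hadamard matrix H_n (over K) in at most 2^{2n}/r entries. -/

import Mathlib

open scoped Classical
open Finset

noncomputable section

def ip {n : ℕ} (x y : Fin n → Bool) : ℕ :=
  (Finset.univ.filter (fun i => x i ∧ y i)).card

def wt {n : ℕ} (x : Fin n → Bool) : ℕ :=
  (Finset.univ.filter (fun i => x i)).card

def Had (K : Type) [Field K] (n : ℕ) : Matrix (Fin n → Bool) (Fin n → Bool) K :=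
  Matrix.of fun x y => (-1 : K) ^ ip x y

def diffCount {n : ℕ} {K : Type} [Field K]
    (A B : Matrix (Fin n → Bool) (Fin n → Bool) K) : ℕ :=
  Nat.card {p : (Fin n → Bool) × (Fin n → Bool) // A p.1 p.2 ≠ B p.1 p.2}

def ProbRankLE {n : ℕ} {K : Type} [Field K]
    (A : Matrix (Fin n → Bool) (Fin n → Bool) K) (ε r : ℝ) : Prop :=
  ∃ (s : Finset (Matrix (Fin n → Bool) (Fin n → Bool) K))
    (w : Matrix (Fin n → Bool) (Fin n → Bool) K → ℝ),
    (∀ M ∈ s, 0 ≤ w M) ∧ (∑ M ∈ s, w M) = 1 ∧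
    (∀ M ∈ s, ((M.rank : ℝ)) ≤ r) ∧
    ∀ x y : Fin n → Bool, 1 - ε ≤ ∑ M ∈ s, (if M x y = A x y then w M else 0)


set_option maxHeartbeats 1000000


lemma interp_exists (K : Type) [Field K] (a d : ℕ) :
    ∃ c : Fin (d+1) → K, ∀ k : ℕ, a ≤ k → k ≤ a + d →
      ∑ j : Fin (d+1), c j * (k.choose (j:ℕ) : K) = (-1 : K) ^ k := by
  classical
  set W : Matrix (Fin (d+1)) (Fin (d+1)) K := fun i j => (((a + (i:ℕ)).choose (j:ℕ) : ℕ) : K) with hW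
  set L : Matrix (Fin (d+1)) (Fin (d+1)) K := fun i m => (((i:ℕ).choose (m:ℕ) : ℕ) : K) with hL
  set U : Matrix (Fin (d+1)) (Fin (d+1)) K :=
    fun m j => if (m:ℕ) ≤ (j:ℕ) then ((a.choose ((j:ℕ) - (m:ℕ)) : ℕ) : K) else 0 with hU
  have hWLU : W = L * U := by
    ext i j
    have vdm : ((i:ℕ) + a).choose (j:ℕ)
        = ∑ m ∈ range ((j:ℕ)+1), (i:ℕ).choose m * a.choose ((j:ℕ) - m) := by
      rw [Nat.add_choose_eq]
      rw [Finset.Nat.sum_antidiagonal_eq_sum_range_succ (fun p q => (i:ℕ).choose p * a.choose q)]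
    have hWij : W i j = ∑ m ∈ range ((j:ℕ)+1), (((i:ℕ).choose m * a.choose ((j:ℕ) - m) : ℕ) : K) := by
      rw [hW]; simp only [Nat.add_comm a (i:ℕ)]
      rw [vdm]; push_cast; ring_nf
    rw [hWij]
    rw [Matrix.mul_apply]
    have hsplit : ∀ m : Fin (d+1), L i m * U m j
        = if (m:ℕ) ≤ (j:ℕ) then (((i:ℕ).choose (m:ℕ) * a.choose ((j:ℕ) - (m:ℕ)) : ℕ) : K) else 0 := by
      intro m
      rw [hL, hU]
      by_cases h : (m:ℕ) ≤ (j:ℕ) <;> simp [h]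
    simp only [hsplit]
    rw [Fin.sum_univ_eq_sum_range (fun m => if m ≤ (j:ℕ) then (((i:ℕ).choose m * a.choose ((j:ℕ) - m) : ℕ) : K) else 0)]
    rw [← Finset.sum_filter]
    have hfr : (range (d+1)).filter (fun m => m ≤ (j:ℕ)) = range ((j:ℕ)+1) := by
      ext m; simp only [mem_filter, mem_range]
      have := j.isLt; omega
    rw [hfr]
  have hdetL : L.det = 1 := by
    rw [Matrix.det_of_lowerTriangular L ?_]
    · simp [hL]
    · intro i j hij
      simp only [hL]
      rw [Nat.choose_eq_zero_of_lt]
      · simp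
      · exact hij
  have hdetU : U.det = 1 := by
    rw [Matrix.det_of_upperTriangular (M := U) ?_]
    · simp [hU]
    · intro i j hij
      simp only [hU]
      have h2 : (j:ℕ) < (i:ℕ) := hij
      rw [if_neg]
      omega
  have hdet : IsUnit W.det := by
    rw [hWLU, Matrix.det_mul, hdetL, hdetU]; simp
  refine ⟨W⁻¹.mulVec (fun i : Fin (d+1) => (-1 : K) ^ (a + (i:ℕ))), ?_⟩
  intro k hak hkd
  have hmv : W.mulVec (W⁻¹.mulVec (fun i : Fin (d+1) => (-1 : K) ^ (a + (i:ℕ))))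
      = fun i : Fin (d+1) => (-1 : K) ^ (a + (i:ℕ)) := by
    rw [Matrix.mulVec_mulVec, Matrix.mul_nonsing_inv _ hdet, Matrix.one_mulVec]
  set i : Fin (d+1) := ⟨k - a, by omega⟩ with hi
  have := congrFun hmv i
  rw [Matrix.mulVec, dotProduct] at this
  have hki : a + (i:ℕ) = k := by simp [hi]; omega
  rw [hki] at this
  rw [← this]
  apply Finset.sum_congr rfl
  intro j _
  rw [mul_comm]
  congr 2
  simp [hW, hki]


lemma sum_pow_ip (n : ℕ) (l : ℝ) (hl : 0 ≤ l) :
    ∑ p : (Fin n → Bool) × (Fin n → Bool), l ^ ip p.1 p.2 = (3 + l) ^ n := by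
  classical
  have h1 : ∀ (x y : Fin n → Bool), l ^ ip x y
      = ∏ i : Fin n, (if x i ∧ y i then l else 1) := by
    intro x y
    rw [Finset.prod_ite, Finset.prod_const, Finset.prod_const, one_pow, mul_one]
    rfl
  calc ∑ p : (Fin n → Bool) × (Fin n → Bool), l ^ ip p.1 p.2
      = ∑ p : (Fin n → Bool) × (Fin n → Bool), ∏ i : Fin n,
          (if p.1 i ∧ p.2 i then l else 1) := by
        exact Finset.sum_congr rfl fun p _ => h1 p.1 p.2
    _ = ∑ z : (Fin n → Bool × Bool), ∏ i : Fin n, (if (z i).1 ∧ (z i).2 then l else 1) := by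
        apply Fintype.sum_equiv (Equiv.arrowProdEquivProdArrow (Fin n) (fun _ => Bool) (fun _ => Bool)).symm
        intro z
        rfl
    _ = ∏ i : Fin n, ∑ w : Bool × Bool, (if w.1 ∧ w.2 then l else 1) := by
        rw [Finset.prod_univ_sum]
        rw [← Fintype.piFinset_univ]
    _ = (3 + l) ^ n := by
        have : ∑ w : Bool × Bool, (if w.1 ∧ w.2 then l else 1) = 3 + l := by
          rw [Fintype.sum_prod_type]
          simp [Fintype.sum_bool]
          ring
        rw [this, Finset.prod_const, Finset.card_univ, Fintype.card_fin]

lemma card_ip_ge_le (n b : ℕ) (l : ℝ) (hl : 1 ≤ l) :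
    (((univ : Finset ((Fin n → Bool) × (Fin n → Bool))).filter
        (fun p => b ≤ ip p.1 p.2)).card : ℝ) * l ^ b ≤ (3 + l) ^ n := by
  have h0 : (0:ℝ) ≤ l := le_trans zero_le_one hl
  rw [← sum_pow_ip n l h0]
  calc (((univ : Finset ((Fin n → Bool) × (Fin n → Bool))).filter
        (fun p => b ≤ ip p.1 p.2)).card : ℝ) * l ^ b
      = ∑ _p ∈ (univ : Finset ((Fin n → Bool) × (Fin n → Bool))).filter
        (fun p => b ≤ ip p.1 p.2), l ^ b := by rw [Finset.sum_const, nsmul_eq_mul]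
    _ ≤ ∑ p ∈ (univ : Finset ((Fin n → Bool) × (Fin n → Bool))).filter
        (fun p => b ≤ ip p.1 p.2), l ^ ip p.1 p.2 := by
        apply Finset.sum_le_sum
        intro p hp
        exact pow_le_pow_right₀ hl (Finset.mem_filter.mp hp).2
    _ ≤ ∑ p : (Fin n → Bool) × (Fin n → Bool), l ^ ip p.1 p.2 := by
        apply Finset.sum_le_sum_of_subset_of_nonneg (Finset.filter_subset _ _)
        intro p _ _
        positivity

lemma card_ip_le_le (n a : ℕ) (l : ℝ) (h0 : 0 < l) (hl : l ≤ 1) :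
    (((univ : Finset ((Fin n → Bool) × (Fin n → Bool))).filter
        (fun p => ip p.1 p.2 ≤ a)).card : ℝ) * l ^ a ≤ (3 + l) ^ n := by
  rw [← sum_pow_ip n l h0.le]
  calc (((univ : Finset ((Fin n → Bool) × (Fin n → Bool))).filter
        (fun p => ip p.1 p.2 ≤ a)).card : ℝ) * l ^ a
      = ∑ _p ∈ (univ : Finset ((Fin n → Bool) × (Fin n → Bool))).filter
        (fun p => ip p.1 p.2 ≤ a), l ^ a := by rw [Finset.sum_const, nsmul_eq_mul]
    _ ≤ ∑ p ∈ (univ : Finset ((Fin n → Bool) × (Fin n → Bool))).filter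
        (fun p => ip p.1 p.2 ≤ a), l ^ ip p.1 p.2 := by
        apply Finset.sum_le_sum
        intro p hp
        exact pow_le_pow_of_le_one h0.le hl (Finset.mem_filter.mp hp).2
    _ ≤ ∑ p : (Fin n → Bool) × (Fin n → Bool), l ^ ip p.1 p.2 := by
        apply Finset.sum_le_sum_of_subset_of_nonneg (Finset.filter_subset _ _)
        intro p _ _
        positivity


lemma exp_upper (x : ℝ) (hx : |x| ≤ 1) :
    Real.exp x ≤ 1 + x + x^2/2 + |x|^3 * (2/9) := by
  have h := Real.exp_bound hx (n := 3) (by norm_num)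
  have h2 := (abs_le.mp h).2
  have hs : ∑ i ∈ range 3, x ^ i / (Nat.factorial i : ℝ) = 1 + x + x^2/2 := by
    simp [Finset.sum_range_succ, Nat.factorial]
  rw [hs] at h2
  have : ((3:ℕ).succ : ℝ) / ((Nat.factorial 3 : ℕ) * (3:ℕ)) = 2/9 := by norm_num [Nat.factorial]
  rw [this] at h2
  linarith

lemma mgf_bound (s : ℝ) (hs : |s| ≤ 1) :
    3 + Real.exp s ≤ 4 * Real.exp (s/4 + s^2/2) := by
  have key : 3 * Real.exp (-s/4) + Real.exp (3*s/4) ≤ 4 * Real.exp (s^2/2) := by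
    have h1 : |(-s/4)| ≤ 1 := by rw [abs_div, abs_neg]; simp; linarith [abs_nonneg s, hs]
    have h2 : |(3*s/4)| ≤ 1 := by
      rw [abs_div, abs_mul]
      rw [abs_of_nonneg (by norm_num : (0:ℝ) ≤ 3), abs_of_nonneg (by norm_num : (0:ℝ) ≤ 4)]
      rw [div_le_one (by norm_num)]
      linarith [abs_nonneg s, hs]
    have e1 := exp_upper (-s/4) h1
    have e2 := exp_upper (3*s/4) h2
    have e3 : 1 + s^2/2 ≤ Real.exp (s^2/2) := by
      have := Real.add_one_le_exp (s^2/2); linarith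
    have ha1 : |(-s/4)|^3 = |s|^3/64 := by
      rw [abs_div, abs_neg]; rw [div_pow]; norm_num
    have ha2 : |(3*s/4)|^3 = 27*|s|^3/64 := by
      rw [abs_div, abs_mul]; rw [div_pow, mul_pow]; norm_num
    rw [ha1] at e1; rw [ha2] at e2
    have hcube : |s|^3 ≤ s^2 := by
      have h0 : |s|^3 = |s| * s^2 := by rw [pow_succ, sq_abs]; ring
      rw [h0]
      nlinarith [abs_nonneg s, sq_nonneg s]
    nlinarith [Real.exp_pos (s^2/2)]
  have hp : Real.exp (s/4) > 0 := Real.exp_pos _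
  have expand : Real.exp (s/4 + s^2/2) = Real.exp (s/4) * Real.exp (s^2/2) := Real.exp_add _ _
  have e1 : Real.exp (s/4) * Real.exp (-s/4) = 1 := by
    rw [← Real.exp_add]
    rw [show s/4 + -s/4 = 0 by ring]
    exact Real.exp_zero
  have e2 : Real.exp (s/4) * Real.exp (3*s/4) = Real.exp s := by
    rw [← Real.exp_add]; ring_nf
  nlinarith [mul_le_mul_of_nonneg_left key hp.le]

lemma tail_upper (n b : ℕ) (s : ℝ) (hs0 : 0 ≤ s) (hs1 : s ≤ 1) :
    (((univ : Finset ((Fin n → Bool) × (Fin n → Bool))).filter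
        (fun p => b ≤ ip p.1 p.2)).card : ℝ)
      ≤ 4^n * Real.exp ((n:ℝ)*(s/4 + s^2/2) - s*b) := by
  have h1 := card_ip_ge_le n b (Real.exp s) (Real.one_le_exp hs0)
  have h2 : (3 + Real.exp s)^n ≤ (4 * Real.exp (s/4 + s^2/2))^n := by
    apply pow_le_pow_left₀ (by positivity)
    exact mgf_bound s (by rw [abs_of_nonneg hs0]; exact hs1)
  have h3 : (4 * Real.exp (s/4 + s^2/2))^n = 4^n * Real.exp ((n:ℝ)*(s/4 + s^2/2)) := by
    rw [mul_pow, ← Real.exp_nat_mul]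
  have h4 : Real.exp s ^ b = Real.exp (s * b) := by
    rw [← Real.exp_nat_mul]; ring_nf
  have hpos : (0:ℝ) < Real.exp (s * b) := Real.exp_pos _
  rw [h4] at h1
  rw [h3] at h2
  have h5 := le_trans h1 h2
  calc (((univ : Finset ((Fin n → Bool) × (Fin n → Bool))).filter
        (fun p => b ≤ ip p.1 p.2)).card : ℝ)
      ≤ 4^n * Real.exp ((n:ℝ)*(s/4 + s^2/2)) / Real.exp (s * b) := by
        rw [le_div_iff₀ hpos]; exact h5
    _ = 4^n * Real.exp ((n:ℝ)*(s/4 + s^2/2) - s*b) := by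
        rw [Real.exp_sub]; ring

lemma tail_lower (n a : ℕ) (s : ℝ) (hs0 : 0 ≤ s) (hs1 : s ≤ 1) :
    (((univ : Finset ((Fin n → Bool) × (Fin n → Bool))).filter
        (fun p => ip p.1 p.2 ≤ a)).card : ℝ)
      ≤ 4^n * Real.exp ((n:ℝ)*(-s/4 + s^2/2) + s*a) := by
  have h1 := card_ip_le_le n a (Real.exp (-s)) (Real.exp_pos _)
    (Real.exp_le_one_iff.mpr (by linarith))
  have h2 : (3 + Real.exp (-s))^n ≤ (4 * Real.exp (-s/4 + s^2/2))^n := by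
    apply pow_le_pow_left₀ (by positivity)
    have := mgf_bound (-s) (by rw [abs_neg, abs_of_nonneg hs0]; exact hs1)
    calc 3 + Real.exp (-s) ≤ 4 * Real.exp (-s/4 + (-s)^2/2) := this
      _ = 4 * Real.exp (-s/4 + s^2/2) := by rw [neg_sq]
  have h3 : (4 * Real.exp (-s/4 + s^2/2))^n = 4^n * Real.exp ((n:ℝ)*(-s/4 + s^2/2)) := by
    rw [mul_pow, ← Real.exp_nat_mul]
  have h4 : Real.exp (-s) ^ a = Real.exp (-(s * a)) := by
    rw [← Real.exp_nat_mul]; ring_nf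
  have hpos : (0:ℝ) < Real.exp (-(s * a)) := Real.exp_pos _
  rw [h4] at h1
  rw [h3] at h2
  have h5 := le_trans h1 h2
  calc (((univ : Finset ((Fin n → Bool) × (Fin n → Bool))).filter
        (fun p => ip p.1 p.2 ≤ a)).card : ℝ)
      ≤ 4^n * Real.exp ((n:ℝ)*(-s/4 + s^2/2)) / Real.exp (-(s * a)) := by
        rw [le_div_iff₀ hpos]; exact h5
    _ = 4^n * Real.exp ((n:ℝ)*(-s/4 + s^2/2) + s*a) := by
        rw [Real.exp_neg, div_inv_eq_mul, mul_assoc, ← Real.exp_add]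


lemma factorial_le_factorial_mul_pow {j d : ℕ} (h : j ≤ d) :
    d.factorial ≤ j.factorial * d ^ (d - j) := by
  induction d with
  | zero => interval_cases j; simp
  | succ d ih =>
    rcases Nat.eq_or_lt_of_le h with h1 | h1
    · subst h1; simp
    · have hj : j ≤ d := by omega
      have := ih hj
      calc (d+1).factorial = (d+1) * d.factorial := rfl
        _ ≤ (d+1) * (j.factorial * d ^ (d - j)) := by exact Nat.mul_le_mul_left _ this
        _ ≤ (d+1) * (j.factorial * (d+1) ^ (d - j)) := by
            apply Nat.mul_le_mul_left
            apply Nat.mul_le_mul_left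
            exact Nat.pow_le_pow_left (by omega) _
        _ = j.factorial * ((d+1) * (d+1) ^ (d - j)) := by ring
        _ = j.factorial * (d+1) ^ (d + 1 - j) := by
            rw [← pow_succ']
            congr 2
            omega

lemma pow_term_mono {n j d : ℕ} (hj : j ≤ d) (hd : d ≤ n) :
    (n:ℝ) ^ j / j.factorial ≤ (n:ℝ) ^ d / d.factorial := by
  rw [div_le_div_iff₀ (by positivity) (by positivity)]
  have : (n:ℝ)^j * d.factorial ≤ (n:ℝ)^j * (j.factorial * (n:ℝ)^(d-j)) := by
    apply mul_le_mul_of_nonneg_left _ (by positivity)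
    calc ((d.factorial : ℕ) : ℝ) ≤ ((j.factorial * d ^ (d-j) : ℕ) : ℝ) := by
          exact_mod_cast factorial_le_factorial_mul_pow hj
      _ = (j.factorial : ℝ) * (d:ℝ)^(d-j) := by push_cast; ring
      _ ≤ (j.factorial : ℝ) * (n:ℝ)^(d-j) := by
          apply mul_le_mul_of_nonneg_left _ (by positivity)
          exact pow_le_pow_left₀ (by positivity) (by exact_mod_cast hd) _
  calc (n:ℝ)^j * d.factorial ≤ (n:ℝ)^j * (j.factorial * (n:ℝ)^(d-j)) := this
    _ = (n:ℝ)^(j + (d-j)) * j.factorial := by rw [pow_add]; ring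
    _ = (n:ℝ)^d * j.factorial := by congr 2; omega

lemma sum_choose_le_real (n d : ℕ) (hd : d ≤ n) :
    ((∑ j ∈ range (d+1), n.choose j : ℕ) : ℝ) ≤ (d+1) * ((n:ℝ) ^ d / d.factorial) := by
  push_cast
  calc (∑ j ∈ range (d+1), (n.choose j : ℝ))
      ≤ ∑ j ∈ range (d+1), (n:ℝ)^j / j.factorial := by
        apply Finset.sum_le_sum
        intro j _
        exact Nat.choose_le_pow_div j n
    _ ≤ ∑ _j ∈ range (d+1), (n:ℝ)^d / d.factorial := by
        apply Finset.sum_le_sum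
        intro j hj
        exact pow_term_mono (by simp at hj; omega) hd
    _ = (d+1) * ((n:ℝ) ^ d / d.factorial) := by
        rw [Finset.sum_const, Finset.card_range, nsmul_eq_mul]
        push_cast; ring

lemma pow_self_le_exp_mul_factorial (d : ℕ) :
    (d:ℝ)^d ≤ Real.exp d * d.factorial := by
  induction d with
  | zero => simp
  | succ d ih =>
    have step : ((d:ℝ)+1)^d ≤ Real.exp 1 * (d:ℝ)^d := by
      rcases Nat.eq_zero_or_pos d with h | h
      · subst h
        simpa using Real.one_le_exp (by norm_num : (0:ℝ) ≤ 1)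
      · have hd : (0:ℝ) < d := by exact_mod_cast h
        have h1 : (d:ℝ) + 1 ≤ (d:ℝ) * Real.exp (1/(d:ℝ)) := by
          have := Real.add_one_le_exp (1/(d:ℝ))
          calc (d:ℝ) + 1 = (d:ℝ) * (1/(d:ℝ) + 1) := by field_simp; ring
            _ ≤ (d:ℝ) * Real.exp (1/(d:ℝ)) := by
                apply mul_le_mul_of_nonneg_left _ hd.le
                linarith
        calc ((d:ℝ)+1)^d ≤ ((d:ℝ) * Real.exp (1/(d:ℝ)))^d := by
              apply pow_le_pow_left₀ (by positivity) h1
          _ = (d:ℝ)^d * (Real.exp (1/(d:ℝ)))^d := mul_pow _ _ _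
          _ = (d:ℝ)^d * Real.exp 1 := by
              rw [← Real.exp_nat_mul]
              congr 1
              field_simp
          _ = Real.exp 1 * (d:ℝ)^d := by ring
    calc ((d+1:ℕ):ℝ)^(d+1) = ((d:ℝ)+1) * ((d:ℝ)+1)^d := by push_cast; ring
      _ ≤ ((d:ℝ)+1) * (Real.exp 1 * (d:ℝ)^d) := by
          apply mul_le_mul_of_nonneg_left step (by positivity)
      _ ≤ ((d:ℝ)+1) * (Real.exp 1 * (Real.exp d * d.factorial)) := by
          apply mul_le_mul_of_nonneg_left _ (by positivity)
          apply mul_le_mul_of_nonneg_left ih (Real.exp_pos 1).le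
      _ = Real.exp ((d:ℝ)+1) * (((d:ℝ)+1) * d.factorial) := by
          rw [Real.exp_add]; ring
      _ = Real.exp ((d+1:ℕ):ℝ) * ((d+1).factorial) := by
          push_cast [Nat.factorial_succ]
          ring_nf


lemma construction (K : Type) [Field K] (n d : ℕ) (c : Fin (d+1) → K) :
    ∃ B : Matrix (Fin n → Bool) (Fin n → Bool) K,
      (B.rank ≤ ∑ j ∈ range (d+1), n.choose j) ∧
      ∀ x y : Fin n → Bool, B x y = ∑ j : Fin (d+1), c j * (((ip x y).choose (j:ℕ) : ℕ) : K) := by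
  classical
  set cc : ℕ → K := fun m => if h : m ≤ d then c ⟨m, Nat.lt_succ_of_le h⟩ else 0 with hcc
  set P : Matrix (Fin n → Bool) {s : Finset (Fin n) // s.card ≤ d} K :=
    fun x s => cc s.1.card * ∏ i ∈ s.1, (if x i then (1:K) else 0) with hP
  set Q : Matrix {s : Finset (Fin n) // s.card ≤ d} (Fin n → Bool) K :=
    fun s y => ∏ i ∈ s.1, (if y i then (1:K) else 0) with hQ
  refine ⟨P * Q, ?_, ?_⟩
  · calc (P * Q).rank ≤ P.rank := Matrix.rank_mul_le_left P Q
      _ ≤ Fintype.card {s : Finset (Fin n) // s.card ≤ d} := Matrix.rank_le_card_width P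
      _ ≤ ∑ j ∈ range (d+1), n.choose j := by
          rw [Fintype.card_subtype]
          have hsub : (univ : Finset (Finset (Fin n))).filter (fun s => s.card ≤ d)
              ⊆ (range (d+1)).biUnion (fun j => Finset.powersetCard j (univ : Finset (Fin n))) := by
            intro s hs
            simp only [mem_filter, mem_univ, true_and] at hs
            simp only [mem_biUnion, mem_range, Finset.mem_powersetCard]
            exact ⟨s.card, by omega, Finset.subset_univ s, rfl⟩
          calc ((univ : Finset (Finset (Fin n))).filter (fun s => s.card ≤ d)).card
              ≤ ((range (d+1)).biUnion (fun j => Finset.powersetCard j (univ : Finset (Fin n)))).card :=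
                Finset.card_le_card hsub
            _ ≤ ∑ j ∈ range (d+1), (Finset.powersetCard j (univ : Finset (Fin n))).card :=
                Finset.card_biUnion_le
            _ = ∑ j ∈ range (d+1), n.choose j := by
                apply Finset.sum_congr rfl
                intro j _
                rw [Finset.card_powersetCard, Finset.card_univ, Fintype.card_fin]
  · intro x y
    set T : Finset (Fin n) := univ.filter (fun i => x i ∧ y i) with hT
    have hentry : (P * Q) x y
        = ∑ s : {s : Finset (Fin n) // s.card ≤ d},
            (if s.1 ⊆ T then cc s.1.card else 0) := by
      rw [Matrix.mul_apply]
      apply Finset.sum_congr rfl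
      intro s _
      rw [hP, hQ]
      simp only []
      rw [mul_assoc, ← Finset.prod_mul_distrib]
      have hprod : ∏ i ∈ s.1, ((if x i then (1:K) else 0) * (if y i then (1:K) else 0))
          = if s.1 ⊆ T then (1:K) else 0 := by
        by_cases hsub : s.1 ⊆ T
        · rw [if_pos hsub]
          apply Finset.prod_eq_one
          intro i hi
          have := hsub hi
          rw [hT, mem_filter] at this
          rcases this.2 with ⟨h1, h2⟩
          rw [if_pos h1, if_pos h2, mul_one]
        · rw [if_neg hsub]
          rw [Finset.not_subset] at hsub
          obtain ⟨i, hi, hiT⟩ := hsub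
          apply Finset.prod_eq_zero hi
          rw [hT] at hiT
          simp only [mem_filter, mem_univ, true_and, not_and] at hiT
          by_cases h1 : x i
          · rw [if_pos h1, if_neg (by simpa using hiT h1), mul_zero]
          · rw [if_neg h1, zero_mul]
      rw [hprod]
      by_cases hsub : s.1 ⊆ T <;> simp [hsub]
    rw [hentry]
    rw [← Finset.sum_subtype ((univ : Finset (Finset (Fin n))).filter (fun s => s.card ≤ d))
        (fun s => by simp) (fun s => if s ⊆ T then cc s.card else 0)]
    rw [← Finset.sum_filter]
    have hset : ((univ : Finset (Finset (Fin n))).filter (fun s => s.card ≤ d)).filter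
          (fun s => s ⊆ T)
        = (range (d+1)).biUnion (fun j => Finset.powersetCard j T) := by
      ext s
      simp only [mem_filter, mem_univ, true_and, mem_biUnion, mem_range, Finset.mem_powersetCard]
      constructor
      · rintro ⟨h1, h2⟩; exact ⟨s.card, by omega, h2, rfl⟩
      · rintro ⟨j, hj, hsT, hcard⟩; exact ⟨by omega, hsT⟩
    rw [hset]
    rw [Finset.sum_biUnion ?hdisj]
    case hdisj =>
      intro u hu v hv huv
      apply Finset.disjoint_left.mpr
      intro s hsu hsv
      rw [Finset.mem_powersetCard] at hsu hsv
      exact huv (hsu.2 ▸ hsv.2 ▸ rfl)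
    have hinner : ∀ j ∈ range (d+1),
        ∑ s ∈ Finset.powersetCard j T, cc s.card = cc j * ((T.card.choose j : ℕ) : K) := by
      intro j _
      have : ∀ s ∈ Finset.powersetCard j T, cc s.card = cc j := by
        intro s hs
        rw [Finset.mem_powersetCard] at hs
        rw [hs.2]
      rw [Finset.sum_congr rfl this, Finset.sum_const, Finset.card_powersetCard, nsmul_eq_mul]
      ring
    rw [Finset.sum_congr rfl hinner]
    have hTcard : T.card = ip x y := rfl
    rw [hTcard]
    have hccc : ∑ j : Fin (d+1), c j * (((ip x y).choose (j:ℕ) : ℕ) : K)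
        = ∑ j : Fin (d+1), cc (j:ℕ) * (((ip x y).choose (j:ℕ) : ℕ) : K) := by
      apply Finset.sum_congr rfl
      intro j _
      congr 1
      show c j = cc (j:ℕ)
      rw [hcc]
      simp only []
      rw [dif_pos (Nat.lt_succ_iff.mp j.isLt)]
    rw [hccc, Fin.sum_univ_eq_sum_range (fun j => cc j * (((ip x y).choose j : ℕ) : K))]

lemma le_of_sq_le_sq'' {A B : ℝ} (hA : 0 ≤ A) (hB : 0 ≤ B) (h : A^2 ≤ B^2) : A ≤ B :=
  (pow_le_pow_iff_left₀ hA hB (by norm_num)).mp h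

lemma exp_one_sq_lt : Real.exp 1 ^ 2 < 8 := by
  nlinarith [Real.exp_one_lt_d9, Real.exp_pos 1]

/-- Non-rigidity of Hadamard matrices, part II (high-error regime). -/
theorem hadamard_not_rigid_high_error :
    ∃ c : ℝ, 0 < c ∧
      ∀ (K : Type) [Field K], ∀ n : ℕ, ∀ r : ℕ, 2 ≤ r → r ≤ 2 ^ (2 * n) →
        ∃ B : Matrix (Fin n → Bool) (Fin n → Bool) K,
          (B.rank : ℝ) ≤ (max ((n : ℝ) / Real.log r) 2) ^ (c * Real.sqrt (n * Real.logb 2 r)) ∧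
          (diffCount B (Had K n) : ℝ) ≤ 2 ^ (2 * (n : ℝ)) / r := by
  refine ⟨12, by norm_num, ?_⟩
  intro K _ n r h2 hrn
  have hr2 : (2:ℝ) ≤ (r:ℝ) := by exact_mod_cast h2
  have hrpos : (0:ℝ) < r := by linarith
  have hq1 : 1 ≤ Real.logb 2 r := by
    rw [Real.le_logb_iff_rpow_le (by norm_num) hrpos]
    rw [Real.rpow_one]; exact hr2
  have hn1 : 1 ≤ n := by
    rcases Nat.eq_zero_or_pos n with h | h
    · subst h; simp at hrn; omega
    · exact h
  have hn1R : (1:ℝ) ≤ (n:ℝ) := by exact_mod_cast hn1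
  set q := Real.logb 2 r with hq
  set L := Real.sqrt ((n:ℝ) * q) with hLdef
  set M := max ((n : ℝ) / Real.log r) 2 with hMdef
  have hM2 : (2:ℝ) ≤ M := le_max_right _ _
  have hM1 : (1:ℝ) ≤ M := by linarith
  have hlog2pos : (0:ℝ) < Real.log 2 := Real.log_pos (by norm_num)
  have hlogr : Real.log r = q * Real.log 2 := by
    rw [hq, Real.logb]; field_simp
  have hlogrpos : 0 < Real.log r := Real.log_pos (by linarith)
  have hL1 : 1 ≤ L := by
    rw [hLdef]
    rw [show (1:ℝ) = Real.sqrt 1 by simp]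
    apply Real.sqrt_le_sqrt
    nlinarith
  have hLpos : 0 ≤ L := by linarith
  have hLsq : L^2 = (n:ℝ) * q := Real.sq_sqrt (by nlinarith)
  have hgoalrhs : (2:ℝ) ^ (2 * (n:ℝ)) = 4^n := by
    rw [show (2:ℝ) * (n:ℝ) = ((2*n : ℕ) : ℝ) by push_cast; ring]
    rw [Real.rpow_natCast]
    rw [pow_mul]; norm_num
  have hlog2r : Real.log (2*(r:ℝ)) = Real.log 2 + Real.log r := by
    rw [Real.log_mul (by norm_num) (by linarith)]
  by_cases hcase : Real.log (2*(r:ℝ)) ≤ (n:ℝ)/32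
  · -- main construction case
    set ρ := Real.log (2*(r:ℝ)) with hrhodef
    have hρ1 : 1 ≤ ρ := by
      have h4 : Real.log 4 ≤ ρ := by
        apply Real.log_le_log (by norm_num)
        linarith
      have hl2 : (0.6931471803:ℝ) < Real.log 2 := Real.log_two_gt_d9
      have : Real.log 4 = 2 * Real.log 2 := by
        rw [show (4:ℝ) = 2^2 by norm_num, Real.log_pow]; push_cast; ring
      nlinarith
    have hρpos : (0:ℝ) < ρ := by linarith
    have hn32 : 32 * ρ ≤ (n:ℝ) := by
      rw [hrhodef] at *
      linarith
    have hnpos : (0:ℝ) < (n:ℝ) := by linarith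
    set t := Real.sqrt (2*(n:ℝ)*ρ) with htdef
    have ht2 : t^2 = 2*(n:ℝ)*ρ := Real.sq_sqrt (by positivity)
    have htpos : 0 < t := Real.sqrt_pos.mpr (by positivity)
    have ht4 : t ≤ (n:ℝ)/4 := by
      have h1 : t^2 ≤ ((n:ℝ)/4)^2 := by rw [ht2]; nlinarith
      nlinarith
    set s := t/(n:ℝ) with hsdef
    have hs0 : 0 < s := by positivity
    have hs1 : s ≤ 1 := by
      rw [hsdef, div_le_one hnpos]; linarith
    have hs2 : s^2 = 2*ρ/(n:ℝ) := by
      rw [hsdef, div_pow, ht2]; field_simp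
    have hkey : (n:ℝ) * (s^2/2) = ρ := by
      rw [hs2]; field_simp
    have hst : s * t = 2 * ρ := by
      rw [hsdef, div_mul_eq_mul_div, ← sq, ht2]; field_simp
    set a := ⌈(n:ℝ)/4 - t⌉₊ with hadef
    have ha_nonneg : (0:ℝ) ≤ (n:ℝ)/4 - t := by linarith
    have ha_low : (n:ℝ)/4 - t ≤ (a:ℝ) := Nat.le_ceil _
    have ha_high : (a:ℝ) ≤ (n:ℝ)/4 - t + 1 := (Nat.ceil_lt_add_one ha_nonneg).le
    set d := ⌈2*t⌉₊ + 1 with hddef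
    have hd_low : 2*t + 1 ≤ (d:ℝ) := by
      rw [hddef]; push_cast; linarith [Nat.le_ceil (2*t)]
    have hd_high : (d:ℝ) ≤ 2*t + 2 := by
      rw [hddef]; push_cast
      linarith [(Nat.ceil_lt_add_one (show (0:ℝ) ≤ 2*t by positivity)).le]
    have hd1 : 1 ≤ d := by omega
    have hd1R : (1:ℝ) ≤ (d:ℝ) := by exact_mod_cast hd1
    have hdn : d ≤ n := by
      have : (d:ℝ) ≤ (n:ℝ) := by linarith
      exact_mod_cast this
    obtain ⟨c, hc⟩ := interp_exists K a d
    obtain ⟨B, hBrank, hBentry⟩ := construction K n d c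
    have hagree : ∀ x y : Fin n → Bool, a ≤ ip x y → ip x y ≤ a + d →
        B x y = Had K n x y := by
      intro x y h1 h2
      rw [hBentry, hc _ h1 h2]
      rfl
    have hexpρ : Real.exp (-ρ) = 1/(2*(r:ℝ)) := by
      rw [Real.exp_neg, hrhodef, Real.exp_log (by linarith), one_div]
    refine ⟨B, ?_, ?_⟩
    · -- rank bound
      have hdpos : (0:ℝ) < (d:ℝ) := by linarith
      have hfacpos : (0:ℝ) < (d.factorial:ℝ) := by exact_mod_cast d.factorial_pos
      have hed : Real.exp 1 ^ d = Real.exp d := by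
        rw [← Real.exp_nat_mul]; ring_nf
      have hfact : (n:ℝ)^d / (d.factorial:ℝ) ≤ (Real.exp 1 * (n:ℝ) / d)^d := by
        have hf := pow_self_le_exp_mul_factorial d
        rw [div_pow, mul_pow, hed]
        rw [div_le_div_iff₀ hfacpos (by positivity)]
        calc (n:ℝ)^d * (d:ℝ)^d ≤ (n:ℝ)^d * (Real.exp d * d.factorial) := by
              apply mul_le_mul_of_nonneg_left hf (by positivity)
          _ = Real.exp d * (n:ℝ)^d * d.factorial := by ring
      -- bound e * n / d ≤ M
      set u := Real.sqrt ((n:ℝ)/Real.log r) with hudef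
      have hu0 : 0 ≤ u := Real.sqrt_nonneg _
      have hu2 : u^2 = (n:ℝ)/Real.log r := Real.sq_sqrt (by positivity)
      have hexp1 : Real.exp 1 < 2.7182818286 := Real.exp_one_lt_d9
      have hexp1p : 0 < Real.exp 1 := Real.exp_pos 1
      have hsq8 : 8*(n:ℝ)^2 ≤ (2*u*t)^2 := by
        have h1 : (2*u*t)^2 = 4 * u^2 * t^2 := by ring
        rw [h1, hu2, ht2]
        have : 4 * ((n:ℝ)/Real.log r) * (2*(n:ℝ)*ρ) = 8 * (n:ℝ)^2 * (ρ / Real.log r) := by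
          field_simp; ring
        rw [this]
        have hρr : Real.log r ≤ ρ := by rw [hlog2r]; linarith
        have h2 : (1:ℝ) ≤ ρ / Real.log r := by
          rw [le_div_iff₀ hlogrpos]; linarith
        calc 8*(n:ℝ)^2 = 8*(n:ℝ)^2 * 1 := by ring
          _ ≤ 8*(n:ℝ)^2 * (ρ / Real.log r) := by
              apply mul_le_mul_of_nonneg_left h2 (by positivity)
      have hen2ut : Real.exp 1 * (n:ℝ) ≤ 2*u*t := by
        apply le_of_sq_le_sq'' (by positivity) (by positivity)
        calc (Real.exp 1 * (n:ℝ))^2 = Real.exp 1 ^2 * (n:ℝ)^2 := by ring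
          _ ≤ 8 * (n:ℝ)^2 := by
              apply mul_le_mul_of_nonneg_right exp_one_sq_lt.le (by positivity)
          _ ≤ (2*u*t)^2 := hsq8
      have hen : Real.exp 1 * (n:ℝ) / d ≤ M := by
        have huM : u ≤ M := by
          rcases le_total u 2 with h | h
          · linarith
          · have h2 : u^2 ≤ M := by rw [hu2]; exact le_max_left _ _
            have h3 : u ≤ u^2 := by
              calc u = u * 1 := by ring
                _ ≤ u * u := by apply mul_le_mul_of_nonneg_left (by linarith) (by linarith)
                _ = u^2 := by ring
            linarith
        have h2td : 2*u*t ≤ u * d := by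
          have : u * (2*t) ≤ u * d := by
            apply mul_le_mul_of_nonneg_left _ hu0
            linarith
          linarith [this]
        rw [div_le_iff₀ hdpos]
        calc Real.exp 1 * (n:ℝ) ≤ 2*u*t := hen2ut
          _ ≤ u * d := h2td
          _ ≤ M * d := by
            apply mul_le_mul_of_nonneg_right huM (by linarith)
      have hd2 : ((d:ℝ)+1) ≤ 2^d := by
        have := Nat.lt_two_pow_self (n := d)
        exact_mod_cast Nat.succ_le_of_lt this
      have htL : t ≤ 2*L := by
        have hl2 : Real.log 2 < 0.6931471808 := Real.log_two_lt_d9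
        apply le_of_sq_le_sq'' htpos.le (by positivity)
        rw [ht2]
        have h4 : (2*L)^2 = 4*((n:ℝ)*q) := by rw [mul_pow, hLsq]; ring
        rw [h4]
        have hρq : ρ ≤ 1.4 * q := by
          rw [hlog2r, hlogr]
          have : q * Real.log 2 ≤ q * 0.7 := by
            apply mul_le_mul_of_nonneg_left (by linarith) (by linarith)
          linarith
        calc 2*(n:ℝ)*ρ ≤ 2*(n:ℝ)*(1.4*q) := by
              apply mul_le_mul_of_nonneg_left hρq (by linarith)
          _ ≤ 4*((n:ℝ)*q) := by
              have hq0 : 0 ≤ q := by linarith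
              have h27 : 2.8 * ((n:ℝ)*q) ≤ 4 * ((n:ℝ)*q) := by
                apply mul_le_mul_of_nonneg_right (by norm_num) (by positivity)
              have h28 : 2*(n:ℝ)*(1.4*q) = 2.8*((n:ℝ)*q) := by ring
              linarith
      have hexpo : 2*(d:ℝ) ≤ 12 * L := by linarith
      calc (B.rank : ℝ) ≤ ((∑ j ∈ range (d+1), n.choose j : ℕ) : ℝ) := by exact_mod_cast hBrank
        _ ≤ ((d:ℝ)+1) * ((n:ℝ) ^ d / d.factorial) := by
            have := sum_choose_le_real n d hdn
            push_cast at this ⊢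
            linarith
        _ ≤ 2^d * (Real.exp 1 * (n:ℝ) / d)^d := by
            apply mul_le_mul hd2 hfact (by positivity)
            positivity
        _ ≤ M^d * M^d := by
            apply mul_le_mul (pow_le_pow_left₀ (by norm_num) hM2 d)
              (pow_le_pow_left₀ (by positivity) hen d) (by positivity) (by positivity)
        _ = M^(2*d : ℕ) := by rw [← pow_add]; congr 1; omega
        _ = M^((2*d : ℕ) : ℝ) := by rw [Real.rpow_natCast]
        _ ≤ M^(12 * L) := by
            apply Real.rpow_le_rpow_of_exponent_le hM1
            have hcd : ((2*d : ℕ):ℝ) = 2*(d:ℝ) := by push_cast; ring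
            rw [hcd]
            exact hexpo
    · -- diff count bound
      rw [hgoalrhs]
      have hns : (n:ℝ)*s = t := by rw [hsdef]; field_simp
      have hdc : (diffCount B (Had K n) : ℕ)
          = ((univ : Finset ((Fin n → Bool) × (Fin n → Bool))).filter
              (fun p => B p.1 p.2 ≠ Had K n p.1 p.2)).card := by
        rw [diffCount, Nat.card_eq_fintype_card, Fintype.card_subtype]
      set Flo := (univ : Finset ((Fin n → Bool) × (Fin n → Bool))).filter
          (fun p => ip p.1 p.2 + 1 ≤ a) with hFlo
      set Fhi := (univ : Finset ((Fin n → Bool) × (Fin n → Bool))).filter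
          (fun p => a + d + 1 ≤ ip p.1 p.2) with hFhi
      have hsub : ((univ : Finset ((Fin n → Bool) × (Fin n → Bool))).filter
          (fun p => B p.1 p.2 ≠ Had K n p.1 p.2)) ⊆ Flo ∪ Fhi := by
        intro p hp
        simp only [mem_filter, mem_univ, true_and] at hp
        rw [Finset.mem_union, hFlo, hFhi]
        simp only [mem_filter, mem_univ, true_and]
        by_contra hcon
        push_neg at hcon
        exact hp (hagree _ _ (by omega) (by omega))
      have hlo : (Flo.card : ℝ) ≤ 4^n / (2*(r:ℝ)) := by
        rcases Nat.eq_zero_or_pos a with ha0 | ha1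
        · have : Flo = ∅ := by
            rw [hFlo]
            apply Finset.filter_false_of_mem
            intro p _
            omega
          rw [this]
          simp only [Finset.card_empty, Nat.cast_zero]
          positivity
        · have hsub2 : Flo ⊆ (univ : Finset ((Fin n → Bool) × (Fin n → Bool))).filter
              (fun p => ip p.1 p.2 ≤ a - 1) := by
            intro p hp
            rw [hFlo, mem_filter] at hp
            rw [mem_filter]
            exact ⟨hp.1, by omega⟩
          have h1 : (Flo.card : ℝ) ≤ (((univ : Finset ((Fin n → Bool) × (Fin n → Bool))).filter
              (fun p => ip p.1 p.2 ≤ a - 1)).card : ℝ) := by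
            exact_mod_cast Finset.card_le_card hsub2
          have h2 := tail_lower n (a-1) s hs0.le hs1
          have hcast : (((a-1 : ℕ)):ℝ) = (a:ℝ) - 1 := by
            rw [Nat.cast_sub ha1]; norm_num
          have hexpon : (n:ℝ)*(-s/4 + s^2/2) + s*((a-1:ℕ):ℝ) ≤ -ρ := by
            rw [hcast]
            have e1 : (n:ℝ)*(-s/4+s^2/2) = -(t/4) + ρ := by
              have e0 : (n:ℝ)*(-s/4+s^2/2) = -(((n:ℝ)*s)/4) + (n:ℝ)*(s^2/2) := by ring
              rw [e0, hns, hkey]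
            have e2 : s*((a:ℝ)-1) ≤ s*((n:ℝ)/4 - t) := by
              apply mul_le_mul_of_nonneg_left (by linarith) hs0.le
            have e3 : s*((n:ℝ)/4 - t) = t/4 - 2*ρ := by
              have e0 : s*((n:ℝ)/4 - t) = ((n:ℝ)*s)/4 - s*t := by ring
              rw [e0, hns, hst]
            linarith
          calc (Flo.card : ℝ)
              ≤ 4^n * Real.exp ((n:ℝ)*(-s/4 + s^2/2) + s*((a-1:ℕ):ℝ)) := le_trans h1 h2
            _ ≤ 4^n * Real.exp (-ρ) := by
                apply mul_le_mul_of_nonneg_left (Real.exp_le_exp.mpr hexpon) (by positivity)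
            _ = 4^n / (2*(r:ℝ)) := by rw [hexpρ]; ring
      have hhi : (Fhi.card : ℝ) ≤ 4^n / (2*(r:ℝ)) := by
        have h2 := tail_upper n (a+d+1) s hs0.le hs1
        have hexpon : (n:ℝ)*(s/4 + s^2/2) - s*((a+d+1 : ℕ):ℝ) ≤ -ρ := by
          have hcast : ((a+d+1 : ℕ):ℝ) = (a:ℝ) + (d:ℝ) + 1 := by push_cast; ring
          rw [hcast]
          have e1 : (n:ℝ)*(s/4+s^2/2) = t/4 + ρ := by
            have e0 : (n:ℝ)*(s/4+s^2/2) = (((n:ℝ)*s)/4) + (n:ℝ)*(s^2/2) := by ring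
            rw [e0, hns, hkey]
          have e2 : s*((n:ℝ)/4 + t) ≤ s*((a:ℝ) + (d:ℝ) + 1) := by
            apply mul_le_mul_of_nonneg_left (by linarith) hs0.le
          have e3 : s*((n:ℝ)/4 + t) = t/4 + 2*ρ := by
            have e0 : s*((n:ℝ)/4 + t) = ((n:ℝ)*s)/4 + s*t := by ring
            rw [e0, hns, hst]
          linarith
        calc (Fhi.card : ℝ)
            ≤ 4^n * Real.exp ((n:ℝ)*(s/4 + s^2/2) - s*((a+d+1 : ℕ):ℝ)) := h2
          _ ≤ 4^n * Real.exp (-ρ) := by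
              apply mul_le_mul_of_nonneg_left (Real.exp_le_exp.mpr hexpon) (by positivity)
          _ = 4^n / (2*(r:ℝ)) := by rw [hexpρ]; ring
      calc (diffCount B (Had K n) : ℝ)
          ≤ ((Flo ∪ Fhi).card : ℝ) := by
            rw [hdc]
            exact_mod_cast Finset.card_le_card hsub
        _ ≤ (Flo.card : ℝ) + (Fhi.card : ℝ) := by
            exact_mod_cast Finset.card_union_le Flo Fhi
        _ ≤ 4^n / (2*(r:ℝ)) + 4^n / (2*(r:ℝ)) := by linarith
        _ = 4^n / (r:ℝ) := by field_simp; ring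
  · -- trivial case: B = Had
    push_neg at hcase
    refine ⟨Had K n, ?_, ?_⟩
    · have hrank : (Had K n).rank ≤ 2^n := by
        have := Matrix.rank_le_card_width (Had K n)
        simpa [Fintype.card_fun] using this
      have hn12L : (n:ℝ) ≤ 12 * L := by
        have hlog2lt : Real.log 2 < 0.6931471808 := Real.log_two_lt_d9
        have hq' : (n:ℝ) < 44.8 * q := by
          have h1 : (n:ℝ)/32 < Real.log 2 + q * Real.log 2 := by
            rw [← hlogr, ← hlog2r]; exact hcase
          nlinarith
        have : (n:ℝ)^2 ≤ 144 * ((n:ℝ) * q) := by nlinarith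
        calc (n:ℝ) = Real.sqrt ((n:ℝ)^2) := by
              rw [Real.sqrt_sq (by linarith)]
          _ ≤ Real.sqrt (144 * ((n:ℝ)*q)) := Real.sqrt_le_sqrt this
          _ = 12 * L := by
              rw [show (144:ℝ) * ((n:ℝ)*q) = 12^2 * ((n:ℝ)*q) by norm_num]
              rw [Real.sqrt_mul (by positivity), Real.sqrt_sq (by norm_num)]
      calc ((Had K n).rank : ℝ) ≤ ((2^n : ℕ) : ℝ) := by exact_mod_cast hrank
        _ = (2:ℝ) ^ ((n:ℕ) : ℝ) := by rw [Real.rpow_natCast]; push_cast; ring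
        _ ≤ (2:ℝ) ^ (12 * L) := by
            apply Real.rpow_le_rpow_of_exponent_le (by norm_num) hn12L
        _ ≤ M ^ (12 * L) := by
            apply Real.rpow_le_rpow (by norm_num) hM2 (by positivity)
    · have : diffCount (Had K n) (Had K n) = 0 := by
        have : IsEmpty {p : (Fin n → Bool) × (Fin n → Bool) //
            Had K n p.1 p.2 ≠ Had K n p.1 p.2} := ⟨fun p => p.2 rfl⟩
        rw [diffCount, Nat.card_of_isEmpty]
      rw [this]
      rw [hgoalrhs]
      simp only [Nat.cast_zero]
      positivity
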